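/- Let Γ be a finite simple graph and let v be a vertex of Γ that is adjacent to two or more vertices of degree 1. Then Lights Out is not universally solvable on the complement graph Γ^C. -/
import Mathlib


open scoped Classical in
/-- The neighborhood matrix of a finite simple graph over the field `ZMod 2`:
the entry at `(i, j)` is `1` if `i = j` or `i` and `j` are adjacent, and `0` otherwise. -/
noncomputable def nbhdMatrix {V : Type} [Fintype V] [DecidableEq V] (G : SimpleGraph V) :
    Matrix V V (ZMod 2) :=
  Matrix.of fun i j => if i = j ∨ G.Adj i j then 1 else 0

/-- Lights Out is universally solvable on a finite simple graph iff its neighborhood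
matrix over `ZMod 2` is invertible. -/
def UniversallySolvable {V : Type} [Fintype V] [DecidableEq V] (G : SimpleGraph V) : Prop :=
  IsUnit (nbhdMatrix G)

/-- If a vertex `v` of a finite simple graph `Γ` is adjacent to two or more vertices of
degree 1, then Lights Out is not universally solvable on the complement graph `Γᶜ`. -/
theorem not_universallySolvable_compl_of_two_pendant_neighbors {V : Type} [Fintype V]
    [DecidableEq V] (G : SimpleGraph V) [DecidableRel G.Adj] (v a b : V) (hab : a ≠ b)
    (hva : G.Adj v a) (hvb : G.Adj v b) (ha : G.degree a = 1) (hb : G.degree b = 1) :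
    ¬ UniversallySolvable Gᶜ := by
  intro hU
  have hav : a ≠ v := fun h => G.irrefl (h ▸ hva)
  have hbv : b ≠ v := fun h => G.irrefl (h ▸ hvb)
  have hNa : G.neighborFinset a = {v} := by
    obtain ⟨x, hx⟩ := Finset.card_eq_one.mp ha
    have hv : v ∈ G.neighborFinset a := by
      simpa [SimpleGraph.mem_neighborFinset] using hva.symm
    rw [hx] at hv ⊢
    simp_all
  have hNb : G.neighborFinset b = {v} := by
    obtain ⟨x, hx⟩ := Finset.card_eq_one.mp hb
    have hv : v ∈ G.neighborFinset b := by
      simpa [SimpleGraph.mem_neighborFinset] using hvb.symm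
    rw [hx] at hv ⊢
    simp_all
  have hAa : ∀ j, G.Adj a j ↔ j = v := fun j => by
    rw [← SimpleGraph.mem_neighborFinset, hNa, Finset.mem_singleton]
  have hAb : ∀ j, G.Adj b j ↔ j = v := fun j => by
    rw [← SimpleGraph.mem_neighborFinset, hNb, Finset.mem_singleton]
  have hrow : nbhdMatrix Gᶜ a = nbhdMatrix Gᶜ b := by
    funext j
    simp only [nbhdMatrix, Matrix.of_apply, SimpleGraph.compl_adj]
    by_cases hj : j = v
    · have h1 : ¬ (a = j ∨ a ≠ j ∧ ¬G.Adj a j) := by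
        subst hj; simp [hav, (hAa j).mpr rfl]
      have h2 : ¬ (b = j ∨ b ≠ j ∧ ¬G.Adj b j) := by
        subst hj; simp [hbv, (hAb j).mpr rfl]
      rw [if_neg h1, if_neg h2]
    · have h1 : a = j ∨ a ≠ j ∧ ¬G.Adj a j := by
        by_cases h : a = j
        · exact Or.inl h
        · exact Or.inr ⟨h, fun hadj => hj ((hAa j).mp hadj)⟩
      have h2 : b = j ∨ b ≠ j ∧ ¬G.Adj b j := by
        by_cases h : b = j
        · exact Or.inl h
        · exact Or.inr ⟨h, fun hadj => hj ((hAb j).mp hadj)⟩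
      rw [if_pos h1, if_pos h2]
  have hdet : (nbhdMatrix Gᶜ).det = 0 := Matrix.det_zero_of_row_eq hab hrow
  have := (Matrix.isUnit_iff_isUnit_det _).mp hU
  rw [hdet] at this
  simp at this
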